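/- Let T > 0. Let an OZF multiplier be given by data: a measurable integrable h : ℝ → ℝ with h ≥ 0, a summable family of weights w : ℕ → ℝ with wᵢ ≥ 0, and times τ : ℕ → ℝ with τᵢ ≠ 0, satisfying ∫_ℝ h + Σᵢ wᵢ < 1. Suppose this multiplier is not an Altshuller multiplier with period T in the following sense: either (i) there exists i with wᵢ > 0 and τᵢ not an integer multiple of T, or (ii) there exist h̲ > 0, t_j ∈ ℝ and δ > 0 with 0 < δ < T such that h(t) ≥ h̲ for almost every t ∈ (t_j, t_j + δ) and the interval (t_j, t_j + δ) contains no integer multiple of T/2. Then there exist a periodic MMB nonlinearity N with period T and u ∈ L²(ℝ) such that, with y(t) = N(t, u(t)), ∫_ℝ ( u(t) − ∫_ℝ h(s) u(t−s) ds − Σᵢ wᵢ u(t − τᵢ) ) · y(t) dt < 0. -/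

import Mathlib

open MeasureTheory

/-- A periodic memoryless, monotone and bounded (MMB) nonlinearity with period `T`. -/
def IsPeriodicMMB (N : ℝ → ℝ → ℝ) (T : ℝ) : Prop :=
  Measurable (Function.uncurry N) ∧
  (∀ t x : ℝ, N (t + T) x = N t x) ∧
  (∀ t : ℝ, Monotone (N t)) ∧
  ∃ C : ℝ, 0 ≤ C ∧ ∀ t x : ℝ, |N t x| ≤ C * |x|

noncomputable def NF (T ε : ℝ) (t x : ℝ) : ℝ :=
  if Int.fract (t / T) * T < ε then x else 0

section Aux
open Set

noncomputable def uF (σ ε K : ℝ) (t : ℝ) : ℝ :=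
  if t ∈ Set.Ioo (0:ℝ) ε then 1 else if t ∈ Set.Ioo (-σ) (-σ + ε) then K else 0

lemma uF_meas (σ ε K : ℝ) : Measurable (uF σ ε K) := by
  unfold uF
  exact Measurable.ite measurableSet_Ioo measurable_const
    (Measurable.ite measurableSet_Ioo measurable_const measurable_const)

lemma uF_nonneg {σ ε K : ℝ} (hK : 0 ≤ K) (t : ℝ) : 0 ≤ uF σ ε K t := by
  unfold uF; split_ifs <;> norm_num [hK]

lemma uF_le {σ ε K : ℝ} (hK : 0 ≤ K) (t : ℝ) : uF σ ε K t ≤ max 1 K := by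
  unfold uF; split_ifs
  · exact le_max_left _ _
  · exact le_max_right _ _
  · positivity

lemma uF_memℒp (σ ε K : ℝ) : MemLp (uF σ ε K) 2 (volume : Measure ℝ) := by
  have : uF σ ε K = fun t => (Set.Ioo (0:ℝ) ε).indicator (fun _ => (1:ℝ)) t
      + ((Set.Ioo (-σ) (-σ+ε)) \ (Set.Ioo (0:ℝ) ε)).indicator (fun _ => K) t := by
    funext t
    by_cases h1 : t ∈ Set.Ioo (0:ℝ) ε <;> by_cases h2 : t ∈ Set.Ioo (-σ) (-σ+ε) <;>
      simp [uF, h1, h2]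
  rw [this]
  refine MemLp.add ?_ ?_
  · exact memLp_indicator_const 2 measurableSet_Ioo 1
      (Or.inr (by rw [Real.volume_Ioo]; exact ENNReal.ofReal_ne_top))
  · refine memLp_indicator_const 2 (measurableSet_Ioo.diff measurableSet_Ioo) K
      (Or.inr ?_)
    exact ne_top_of_le_ne_top (by rw [Real.volume_Ioo]; exact ENNReal.ofReal_ne_top)
      (measure_mono Set.diff_subset)

lemma integrable_mul_uF {h : ℝ → ℝ} (hhm : Measurable h) (hhint : Integrable h)
    {σ ε K : ℝ} (hK : 0 ≤ K) (t : ℝ) :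
    Integrable (fun s => h s * uF σ ε K (t - s)) := by
  have : (fun s => h s * uF σ ε K (t - s)) = fun s => uF σ ε K (t - s) * h s := by
    funext s; ring
  rw [this]
  refine hhint.bdd_mul (c := max 1 K) ?_ (ae_of_all _ (fun s => ?_))
  · exact ((uF_meas σ ε K).comp (measurable_const.sub measurable_id)).aestronglyMeasurable
  · rw [Real.norm_eq_abs, abs_of_nonneg (uF_nonneg hK _)]
    exact uF_le hK _

lemma NF_isPeriodicMMB (T ε : ℝ) (hT : 0 < T) : IsPeriodicMMB (NF T ε) T := by
  refine ⟨?_, ?_, ?_, 1, zero_le_one, ?_⟩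
  · have : Function.uncurry (NF T ε) =
        fun p : ℝ × ℝ => if Int.fract (p.1 / T) * T < ε then p.2 else 0 := rfl
    rw [this]
    exact Measurable.ite
      (measurableSet_lt ((measurable_fract.comp (measurable_fst.div_const T)).mul_const T)
        measurable_const) measurable_snd measurable_const
  · intro t x
    have : (t + T) / T = t / T + (1:ℤ) := by push_cast; field_simp
    simp only [NF, this, Int.fract_add_intCast]
  · intro t x y hxy
    simp only [NF]
    split_ifs
    · exact hxy
    · exact le_refl 0
  · intro t x
    simp only [NF]
    split_ifs
    · simp
    · simp

-- geometric lemmas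
lemma condA {T ε : ℝ} (hT : 0 < T) (hεT : ε < T) {t : ℝ} (ht : t ∈ Set.Ioo (0:ℝ) ε) :
    Int.fract (t / T) * T < ε := by
  have h1 : Int.fract (t / T) = t / T := by
    rw [Int.fract_eq_self]
    constructor
    · exact div_nonneg ht.1.le hT.le
    · rw [div_lt_one hT]; linarith [ht.2]
  rw [h1, div_mul_cancel₀ _ hT.ne']
  exact ht.2

lemma condB {T σ ε : ℝ} (hT : 0 < T)
    (hks : ∀ k : ℤ, ((k : ℝ) * T) ∉ Set.Ioo (σ - ε) (σ + ε))
    {t : ℝ} (ht : t ∈ Set.Ioo (-σ) (-σ + ε)) :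
    ¬ (Int.fract (t / T) * T < ε) := by
  intro hlt
  set k := ⌊t / T⌋ with hk
  have hfr : Int.fract (t / T) * T = t - (k : ℝ) * T := by
    rw [Int.fract]
    rw [sub_mul, div_mul_cancel₀ _ hT.ne']
  have h0 : 0 ≤ t - (k : ℝ) * T := by
    rw [← hfr]; exact mul_nonneg (Int.fract_nonneg _) hT.le
  have h1 : t - (k : ℝ) * T < ε := by rw [← hfr]; exact hlt
  refine hks (-k) ?_
  constructor
  · push_cast
    nlinarith [ht.1, ht.2]
  · push_cast
    nlinarith [ht.1, ht.2]

lemma notA_of_B {σ ε : ℝ}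
    (hks0 : ((0:ℝ)) ∉ Set.Ioo (σ - ε) (σ + ε))
    {t : ℝ} (ht : t ∈ Set.Ioo (-σ) (-σ + ε)) : t ∉ Set.Ioo (0:ℝ) ε := by
  intro hA
  refine hks0 ?_
  obtain ⟨h1, h2⟩ := ht
  obtain ⟨h3, h4⟩ := hA
  constructor <;> linarith

lemma summable_term {w : ℕ → ℝ} (hws : Summable w) (hwnn : ∀ i, 0 ≤ w i)
    {σ ε K : ℝ} (hK : 0 ≤ K) (τ : ℕ → ℝ) (t : ℝ) :
    Summable (fun i => w i * uF σ ε K (t - τ i)) := by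
  refine Summable.of_nonneg_of_le
    (fun i => mul_nonneg (hwnn i) (uF_nonneg hK _))
    (fun i => mul_le_mul_of_nonneg_left (uF_le hK _) (hwnn i))
    (hws.mul_right (max 1 K))

lemma aux_main (T : ℝ) (hT : 0 < T)
    (h : ℝ → ℝ) (hhm : Measurable h) (hhint : Integrable h) (hhnn : ∀ t : ℝ, 0 ≤ h t)
    (w : ℕ → ℝ) (hws : Summable w) (hwnn : ∀ i : ℕ, 0 ≤ w i)
    (τ : ℕ → ℝ)
    (σ ε K : ℝ) (hε : 0 < ε) (hεT : ε < T) (hK : 0 ≤ K)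
    (hks : ∀ k : ℤ, ((k : ℝ) * T) ∉ Set.Ioo (σ - ε) (σ + ε))
    (hgain : ∀ t ∈ Set.Ioo (0:ℝ) ε,
      2 ≤ (∫ s : ℝ, h s * uF σ ε K (t - s)) + ∑' i : ℕ, w i * uF σ ε K (t - τ i)) :
    (∫ t : ℝ, (uF σ ε K t - (∫ s : ℝ, h s * uF σ ε K (t - s))
        - ∑' i : ℕ, w i * uF σ ε K (t - τ i)) * NF T ε t (uF σ ε K t)) < 0 := by
  set u := uF σ ε K with hu
  set A : Set ℝ := Set.Ioo (0:ℝ) ε with hA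
  set conv : ℝ → ℝ := fun t => ∫ s : ℝ, h s * u (t - s) with hconv
  set sumf : ℝ → ℝ := fun t => ∑' i : ℕ, w i * u (t - τ i) with hsumf
  set M : ℝ := max 1 K with hM
  have hM1 : (1:ℝ) ≤ M := le_max_left _ _
  have hM0 : 0 ≤ M := by linarith
  -- N t (u t) = indicator A 1
  have hNu : ∀ t, NF T ε t (u t) = A.indicator (fun _ => (1:ℝ)) t := by
    intro t
    by_cases htA : t ∈ A
    · rw [Set.indicator_of_mem htA]
      have : u t = 1 := by rw [hu]; unfold uF; rw [if_pos htA]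
      rw [NF, if_pos (condA hT hεT htA), this]
    · rw [Set.indicator_of_notMem htA]
      by_cases htB : t ∈ Set.Ioo (-σ) (-σ + ε)
      · rw [NF, if_neg (condB hT hks htB)]
      · have : u t = 0 := by rw [hu]; unfold uF; rw [if_neg htA, if_neg htB]
        rw [NF, this]; split_ifs <;> rfl
  -- rewrite integrand as an indicator
  have hInd : (fun t => (u t - conv t - sumf t) * NF T ε t (u t))
      = A.indicator (fun t => u t - conv t - sumf t) := by
    funext t
    rw [hNu t]
    by_cases htA : t ∈ A
    · rw [Set.indicator_of_mem htA, Set.indicator_of_mem htA]; ring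
    · rw [Set.indicator_of_notMem htA, Set.indicator_of_notMem htA]; ring
  rw [hInd]
  -- measurability of conv
  have hconv_sm : StronglyMeasurable conv := by
    have hmeas : Measurable (fun p : ℝ × ℝ => h p.2 * u (p.1 - p.2)) :=
      (hhm.comp measurable_snd).mul ((uF_meas σ ε K).comp (measurable_fst.sub measurable_snd))
    exact hmeas.stronglyMeasurable.integral_prod_right'
  -- bound on conv
  have hconv_nonneg : ∀ t, 0 ≤ conv t :=
    fun t => integral_nonneg (fun s => mul_nonneg (hhnn s) (uF_nonneg hK _))
  have hconv_le : ∀ t, conv t ≤ M * (∫ s, |h s|) := by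
    intro t
    have step1 : conv t ≤ ∫ s, |h s| * M := by
      refine integral_mono (integrable_mul_uF hhm hhint hK t) (hhint.abs.mul_const M) ?_
      intro s
      exact mul_le_mul (le_abs_self _) (uF_le hK _) (uF_nonneg hK _) (abs_nonneg _)
    have step2 : (∫ s : ℝ, |h s| * M) = M * ∫ s : ℝ, |h s| := by
      rw [integral_mul_const]; ring
    linarith
  -- measurability of sumf
  have hsum_meas : Measurable sumf := by
    have hterm : ∀ n : ℕ, Measurable (fun t => ∑ i ∈ Finset.range n, w i * u (t - τ i)) := by
      intro n
      exact Finset.measurable_sum _ (fun i _ =>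
        (measurable_const.mul ((uF_meas σ ε K).comp (measurable_id.sub measurable_const))))
    refine measurable_of_tendsto_metrizable hterm (tendsto_pi_nhds.2 (fun t => ?_))
    exact (summable_term hws hwnn hK τ t).hasSum.tendsto_sum_nat
  have hsum_nonneg : ∀ t, 0 ≤ sumf t :=
    fun t => tsum_nonneg (fun i => mul_nonneg (hwnn i) (uF_nonneg hK _))
  have hsum_le : ∀ t, sumf t ≤ (∑' i, w i) * M := by
    intro t
    have step1 : sumf t ≤ ∑' i, w i * M :=
      Summable.tsum_le_tsum (fun i => mul_le_mul_of_nonneg_left (uF_le hK _) (hwnn i))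
        (summable_term hws hwnn hK τ t) (hws.mul_right M)
    have step2 : (∑' i, w i * M) = (∑' i, w i) * M := tsum_mul_right
    linarith
  -- global bound on the integrand inside indicator
  set C := M + M * (∫ s : ℝ, |h s|) + (∑' i : ℕ, w i) * M with hC
  have hφbound : ∀ t, |u t - conv t - sumf t| ≤ C := by
    intro t
    have h1 : 0 ≤ u t := uF_nonneg hK t
    have h2 : u t ≤ M := uF_le hK t
    have h3 : 0 ≤ (∫ s, |h s|) := integral_nonneg (fun s => abs_nonneg _)
    have h4 : 0 ≤ (∑' i, w i) := tsum_nonneg (fun i => hwnn i)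
    rw [abs_le]
    constructor
    · have := hconv_le t; have := hsum_le t; rw [hC]; nlinarith
    · have := hconv_nonneg t; have := hsum_nonneg t; rw [hC]; nlinarith
  -- integrability
  have hAmeas : MeasurableSet A := measurableSet_Ioo
  have hAvol : (volume : Measure ℝ) A ≠ ⊤ := by
    rw [hA, Real.volume_Ioo]; exact ENNReal.ofReal_ne_top
  have hφmeas : Measurable (fun t => u t - conv t - sumf t) :=
    ((uF_meas σ ε K).sub hconv_sm.measurable).sub hsum_meas
  have hint : Integrable (A.indicator (fun t => u t - conv t - sumf t)) := by
    rw [integrable_indicator_iff hAmeas]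
    refine Integrable.mono' (integrableOn_const hAvol)
      hφmeas.aestronglyMeasurable (ae_of_all _ (fun t => hφbound t))
  -- main estimate
  have hle : ∫ t, A.indicator (fun t => u t - conv t - sumf t) t
      ≤ ∫ t, A.indicator (fun _ => (-1:ℝ)) t := by
    refine integral_mono hint ((integrable_indicator_iff hAmeas).mpr
      (integrableOn_const hAvol)) ?_
    intro t
    by_cases htA : t ∈ A
    · rw [Set.indicator_of_mem htA, Set.indicator_of_mem htA]
      have hu1 : u t = 1 := by rw [hu]; unfold uF; rw [if_pos htA]
      have := hgain t htA
      rw [hu1]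
      linarith
    · rw [Set.indicator_of_notMem htA, Set.indicator_of_notMem htA]
  have heq : ∫ t, A.indicator (fun _ => (-1:ℝ)) t = -ε := by
    rw [integral_indicator_const _ hAmeas]
    rw [hA, Real.volume_real_Ioo_of_le hε.le]
    simp [ENNReal.toReal_ofReal hε.le]
  calc (∫ t, A.indicator (fun t => u t - conv t - sumf t) t) ≤ -ε := by rw [← heq]; exact hle
    _ < 0 := by linarith

/-- For `σ` not an integer multiple of `T`, a small `ε` s.t. no `kT` is within `ε` of `σ`. -/
lemma eps_of_not_multiple {T σ : ℝ} (hT : 0 < T) (hσ : ¬ ∃ m : ℤ, σ = (m : ℝ) * T) :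
    ∃ ε : ℝ, 0 < ε ∧ ε < T ∧ ∀ k : ℤ, ((k : ℝ) * T) ∉ Set.Ioo (σ - ε) (σ + ε) := by
  set f := Int.fract (σ / T) with hf
  have hf0 : 0 ≤ f := Int.fract_nonneg _
  have hf1 : f < 1 := Int.fract_lt_one _
  have hfne : f ≠ 0 := by
    intro h0
    refine hσ ⟨⌊σ / T⌋, ?_⟩
    have : σ / T - (⌊σ / T⌋ : ℝ) = 0 := h0
    have h2 : σ / T = (⌊σ / T⌋ : ℝ) := by linarith
    field_simp at h2
    linarith [h2]
  have hfpos : 0 < f := lt_of_le_of_ne hf0 (Ne.symm hfne)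
  have hmin0 : 0 < min f (1 - f) := lt_min hfpos (by linarith)
  refine ⟨min f (1 - f) * T / 2, div_pos (mul_pos hmin0 hT) two_pos, ?_, ?_⟩
  · have : min f (1 - f) ≤ f := min_le_left _ _
    nlinarith
  · intro k hk
    have hσeq : σ = ((⌊σ / T⌋ : ℝ) + f) * T := by
      rw [hf, Int.fract]
      field_simp
      ring
    obtain ⟨hk1, hk2⟩ := hk
    set j := k - ⌊σ / T⌋ with hj
    have hjT : (j : ℝ) * T = (k : ℝ) * T - (⌊σ / T⌋ : ℝ) * T := by push_cast [hj]; ring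
    have hmin1 : min f (1 - f) ≤ f := min_le_left _ _
    have hmin2 : min f (1 - f) ≤ 1 - f := min_le_right _ _
    rcases le_or_gt (j : ℝ) 0 with hj0 | hj0
    · have : (j : ℝ) * T ≤ 0 := mul_nonpos_of_nonpos_of_nonneg hj0 hT.le
      nlinarith
    · have hj1 : (1 : ℝ) ≤ (j : ℝ) := by
        have h1 : (0 : ℤ) < j := by exact_mod_cast hj0
        have h2 : (1 : ℤ) ≤ j := by omega
        exact_mod_cast h2
      have : T ≤ (j : ℝ) * T := le_mul_of_one_le_left hT.le hj1
      nlinarith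

/-- Gain in case (i): the delayed term provides gain 2. -/
lemma gain_case_i (h : ℝ → ℝ) (hhnn : ∀ t : ℝ, 0 ≤ h t)
    (w : ℕ → ℝ) (hws : Summable w) (hwnn : ∀ i : ℕ, 0 ≤ w i)
    (τ : ℕ → ℝ) (i0 : ℕ) (hw0 : 0 < w i0)
    (σ ε : ℝ) (hε : 0 < ε) (hσε : σ = τ i0)
    (hks0 : ((0:ℝ)) ∉ Set.Ioo (σ - ε) (σ + ε)) :
    ∀ t ∈ Set.Ioo (0:ℝ) ε,
      2 ≤ (∫ s : ℝ, h s * uF σ ε (2 / w i0) (t - s))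
        + ∑' i : ℕ, w i * uF σ ε (2 / w i0) (t - τ i) := by
  intro t ht
  set K := 2 / w i0 with hKdef
  have hK : 0 ≤ K := by positivity
  have hconv0 : 0 ≤ ∫ s : ℝ, h s * uF σ ε K (t - s) :=
    integral_nonneg (fun s => mul_nonneg (hhnn s) (uF_nonneg hK _))
  have htB : t - σ ∈ Set.Ioo (-σ) (-σ + ε) := by
    constructor <;> [linarith [ht.1]; linarith [ht.2]]
  have huval : uF σ ε K (t - σ) = K := by
    unfold uF
    rw [if_neg (notA_of_B hks0 htB), if_pos htB]
  have hterm : w i0 * uF σ ε K (t - τ i0) = 2 := by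
    rw [← hσε, huval, hKdef]
    field_simp
  have hle : w i0 * uF σ ε K (t - τ i0) ≤ ∑' i : ℕ, w i * uF σ ε K (t - τ i) :=
    Summable.le_tsum (summable_term hws hwnn hK τ t) i0
      (fun j _ => mul_nonneg (hwnn j) (uF_nonneg hK _))
  linarith

/-- Gain in case (ii): the density term provides gain 2. -/
lemma gain_case_ii (h : ℝ → ℝ) (hhm : Measurable h) (hhint : Integrable h)
    (hhnn : ∀ t : ℝ, 0 ≤ h t)
    (w : ℕ → ℝ) (hwnn : ∀ i : ℕ, 0 ≤ w i) (τ : ℕ → ℝ)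
    (hlb : ℝ) (hlb0 : 0 < hlb) (tj δ : ℝ) (hδ0 : 0 < δ)
    (hae : ∀ᵐ t : ℝ, t ∈ Set.Ioo tj (tj + δ) → hlb ≤ h t)
    (σ ε : ℝ) (hε : 0 < ε) (hσdef : σ = tj + δ / 2) (hεδ : ε = δ / 4)
    (hks0 : ((0:ℝ)) ∉ Set.Ioo (σ - ε) (σ + ε)) :
    ∀ t ∈ Set.Ioo (0:ℝ) ε,
      2 ≤ (∫ s : ℝ, h s * uF σ ε (2 / (hlb * ε)) (t - s))
        + ∑' i : ℕ, w i * uF σ ε (2 / (hlb * ε)) (t - τ i) := by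
  intro t ht
  set K := 2 / (hlb * ε) with hKdef
  have hK : 0 ≤ K := by positivity
  have hsum0 : 0 ≤ ∑' i : ℕ, w i * uF σ ε K (t - τ i) :=
    tsum_nonneg (fun i => mul_nonneg (hwnn i) (uF_nonneg hK _))
  set J := Set.Ioo (t + σ - ε) (t + σ) with hJ
  have hJmeas : MeasurableSet J := measurableSet_Ioo
  have hindint : Integrable (J.indicator (fun _ => hlb * K)) := by
    rw [integrable_indicator_iff hJmeas]
    refine integrableOn_const ?_
    rw [hJ, Real.volume_Ioo]
    exact ENNReal.ofReal_ne_top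
  have hmono : (∫ s : ℝ, J.indicator (fun _ => hlb * K) s)
      ≤ ∫ s : ℝ, h s * uF σ ε K (t - s) := by
    refine integral_mono_ae hindint (integrable_mul_uF hhm hhint hK t) ?_
    filter_upwards [hae] with s hs
    by_cases hsJ : s ∈ J
    · rw [Set.indicator_of_mem hsJ]
      have hsT : s ∈ Set.Ioo tj (tj + δ) := by
        obtain ⟨hs1, hs2⟩ := hsJ
        constructor
        · linarith [ht.1]
        · linarith [ht.2]

      have hhs : hlb ≤ h s := hs hsT
      have htsB : t - s ∈ Set.Ioo (-σ) (-σ + ε) := by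
        obtain ⟨hs1, hs2⟩ := hsJ
        constructor <;> [linarith; linarith]
      have huval : uF σ ε K (t - s) = K := by
        unfold uF
        rw [if_neg (notA_of_B hks0 htsB), if_pos htsB]
      rw [huval]
      exact mul_le_mul_of_nonneg_right hhs hK
    · rw [Set.indicator_of_notMem hsJ]
      exact mul_nonneg (hhnn s) (uF_nonneg hK _)
  have hval : (∫ s : ℝ, J.indicator (fun _ => hlb * K) s) = 2 := by
    rw [integral_indicator_const _ hJmeas, hJ, Real.volume_real_Ioo_of_le (by linarith)]
    have : t + σ - (t + σ - ε) = ε := by ring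
    rw [this]
    rw [hKdef]
    rw [smul_eq_mul]
    have hεne : ε ≠ 0 := hε.ne'
    have hlbne : hlb ≠ 0 := hlb0.ne'
    field_simp
  linarith

end Aux

/-- An OZF multiplier given by data `(h, w, τ)` which is *not* an Altshuller multiplier
with period `T` — either some delay `τᵢ` with weight `wᵢ > 0` is not an integer multiple
of `T`, or the density `h` is bounded below by `h̲ > 0` on an interval of length `δ < T`
containing no integer multiple of `T/2` — fails to preserve the positivity of some
periodic MMB nonlinearity with period `T` for some `u ∈ L²(ℝ)`. -/
theorem non_altshuller_fails_positivity (T : ℝ) (hT : 0 < T)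
    (h : ℝ → ℝ) (hhm : Measurable h) (hhint : Integrable h) (hhnn : ∀ t : ℝ, 0 ≤ h t)
    (w : ℕ → ℝ) (hws : Summable w) (hwnn : ∀ i : ℕ, 0 ≤ w i)
    (τ : ℕ → ℝ) (hτ : ∀ i : ℕ, τ i ≠ 0)
    (hnorm : (∫ t : ℝ, h t) + ∑' i : ℕ, w i < 1)
    (hnotAlt :
      (∃ i : ℕ, 0 < w i ∧ ¬ ∃ m : ℤ, τ i = (m : ℝ) * T) ∨
      (∃ hlb : ℝ, 0 < hlb ∧ ∃ tj δ : ℝ, 0 < δ ∧ δ < T ∧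
        (∀ᵐ t : ℝ, t ∈ Set.Ioo tj (tj + δ) → hlb ≤ h t) ∧
        ¬ ∃ m : ℤ, (m : ℝ) * (T / 2) ∈ Set.Ioo tj (tj + δ))) :
    ∃ N : ℝ → ℝ → ℝ, IsPeriodicMMB N T ∧
      ∃ u : ℝ → ℝ, Measurable u ∧ MemLp u 2 (volume : Measure ℝ) ∧
        (∫ t : ℝ, (u t - (∫ s : ℝ, h s * u (t - s)) - ∑' i : ℕ, w i * u (t - τ i)) *
          N t (u t)) < 0 := by
  rcases hnotAlt with ⟨i0, hw0, hτ0⟩ | ⟨hlb, hlb0, tj, δ, hδ0, hδT, hae, hnm⟩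
  · obtain ⟨ε, hε, hεT, hks⟩ := eps_of_not_multiple hT hτ0
    have hK : 0 ≤ 2 / w i0 := (div_pos two_pos hw0).le
    refine ⟨NF T ε, NF_isPeriodicMMB T ε hT, uF (τ i0) ε (2 / w i0), uF_meas _ _ _,
      uF_memℒp _ _ _, ?_⟩
    refine aux_main T hT h hhm hhint hhnn w hws hwnn τ (τ i0) ε (2 / w i0) hε hεT hK hks ?_
    exact gain_case_i h hhnn w hws hwnn τ i0 hw0 (τ i0) ε hε rfl (by simpa using hks 0)
  · have hε : 0 < δ / 4 := by linarith
    have hεT : δ / 4 < T := by linarith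
    have hK : 0 ≤ 2 / (hlb * (δ / 4)) := (div_pos two_pos (mul_pos hlb0 hε)).le
    have hks : ∀ k : ℤ, ((k : ℝ) * T) ∉
        Set.Ioo (tj + δ / 2 - δ / 4) (tj + δ / 2 + δ / 4) := by
      intro k hk
      refine hnm ⟨2 * k, ?_⟩
      have he : ((2 * k : ℤ) : ℝ) * (T / 2) = (k : ℝ) * T := by push_cast; ring
      rw [he]
      obtain ⟨h1, h2⟩ := hk
      exact ⟨by linarith, by linarith⟩
    refine ⟨NF T (δ / 4), NF_isPeriodicMMB T (δ / 4) hT,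
      uF (tj + δ / 2) (δ / 4) (2 / (hlb * (δ / 4))), uF_meas _ _ _, uF_memℒp _ _ _, ?_⟩
    refine aux_main T hT h hhm hhint hhnn w hws hwnn τ (tj + δ / 2) (δ / 4)
      (2 / (hlb * (δ / 4))) hε hεT hK hks ?_
    exact gain_case_ii h hhm hhint hhnn w hwnn τ hlb hlb0 tj δ hδ0 hae (tj + δ / 2) (δ / 4)
      hε rfl rfl (by simpa using hks 0)
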